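/- arXiv:2505.00943 — 4 statements merged into one kernel-verified Lean document; each statement's English description precedes it below -/
import Mathlib

section
/- Let Γ be a group acting by isometries on a complete CAT(0) space X, and let H₁, H₂ ≤ Γ be subgroups such that H₂ normalizes H₁. If both Fix(H₁) and Fix(H₂) are non-empty, then Fix(H₁) ∩ Fix(H₂) is non-empty. -/
/-- A geodesic segment from `x` to `y`, parameterized proportionally to arc length on `[0,1]`. -/
def IsGeodesicSeg {X : Type*} [MetricSpace X] (x y : X) (γ : ℝ → X) : Prop :=
  γ 0 = x ∧ γ 1 = y ∧
    ∀ s ∈ Set.Icc (0:ℝ) 1, ∀ t ∈ Set.Icc (0:ℝ) 1, dist (γ s) (γ t) = |s - t| * dist x y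

/-- A CAT(0) space: a geodesic metric space satisfying the CN (Bruhat–Tits comparison)
inequality, which for geodesic spaces is equivalent to the CAT(0) comparison-triangle
condition. -/
class CAT0Space (X : Type*) [MetricSpace X] : Prop where
  geodesic : ∀ x y : X, ∃ γ : ℝ → X, IsGeodesicSeg x y γ
  cn : ∀ x y z m : X, dist y m = dist y z / 2 → dist z m = dist y z / 2 →
    dist x m ^ 2 ≤ (dist x y ^ 2 + dist x z ^ 2) / 2 - dist y z ^ 2 / 4

/-- Bruhat–Tits: existence and uniqueness of the circumcenter of a bounded nonempty set `S`
within a closed, nonempty, midpoint-closed set `C` of a complete CAT(0) space. -/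
theorem exists_unique_circumcenter {X : Type*} [MetricSpace X] [CompleteSpace X] [CAT0Space X]
    (C S : Set X) (hC : IsClosed C) (hCne : C.Nonempty) (hSne : S.Nonempty)
    (hbd : ∃ x₀ R, ∀ s ∈ S, dist s x₀ ≤ R)
    (hmid : ∀ y ∈ C, ∀ z ∈ C, ∃ m ∈ C, dist y m = dist y z / 2 ∧ dist z m = dist y z / 2) :
    ∃ c ∈ C, (∀ y ∈ C, sSup ((dist c) '' S) ≤ sSup ((dist y) '' S)) ∧
      ∀ c' ∈ C, (∀ y ∈ C, sSup ((dist c') '' S) ≤ sSup ((dist y) '' S)) → c' = c := by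
  obtain ⟨s₀, hs₀⟩ := hSne
  obtain ⟨x₀, R, hR⟩ := hbd
  set r : X → ℝ := fun y => sSup ((dist y) '' S) with hr
  have hbdd : ∀ y : X, BddAbove ((dist y) '' S) := by
    intro y
    refine ⟨dist y x₀ + R, ?_⟩
    rintro _ ⟨s, hs, rfl⟩
    calc dist y s ≤ dist y x₀ + dist x₀ s := dist_triangle _ _ _
      _ ≤ dist y x₀ + R := by have := hR s hs; rw [dist_comm] at this; linarith
  have hrge : ∀ y : X, ∀ s ∈ S, dist y s ≤ r y := fun y s hs =>
    le_csSup (hbdd y) ⟨s, hs, rfl⟩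
  have hr0 : ∀ y : X, 0 ≤ r y := fun y => le_trans dist_nonneg (hrge y s₀ hs₀)
  have hrle : ∀ y : X, ∀ b : ℝ, (∀ s ∈ S, dist y s ≤ b) → r y ≤ b := by
    intro y b hb
    exact csSup_le ⟨dist y s₀, ⟨s₀, hs₀, rfl⟩⟩ (by rintro _ ⟨s, hs, rfl⟩; exact hb s hs)
  have hlip : ∀ y z : X, r y ≤ r z + dist y z := by
    intro y z
    refine hrle y _ (fun s hs => ?_)
    calc dist y s ≤ dist y z + dist z s := dist_triangle _ _ _
      _ ≤ dist y z + r z := by linarith [hrge z s hs]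
      _ = r z + dist y z := by ring
  set ρ : ℝ := sInf (r '' C) with hρ
  have hρbdd : BddBelow (r '' C) := ⟨0, by rintro _ ⟨y, _, rfl⟩; exact hr0 y⟩
  have hρle : ∀ y ∈ C, ρ ≤ r y := fun y hy => csInf_le hρbdd ⟨y, hy, rfl⟩
  have hρ0 : 0 ≤ ρ := le_csInf (hCne.image r) (by rintro _ ⟨y, _, rfl⟩; exact hr0 y)
  -- key inequality
  have key : ∀ y ∈ C, ∀ z ∈ C, dist y z ^ 2 ≤ 2 * (r y ^ 2 + r z ^ 2) - 4 * ρ ^ 2 := by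
    intro y hy z hz
    obtain ⟨m, hm, hmy, hmz⟩ := hmid y hy z hz
    have hrm : r m ^ 2 ≤ (r y ^ 2 + r z ^ 2) / 2 - dist y z ^ 2 / 4 := by
      have hs : ∀ s ∈ S, dist s m ^ 2 ≤ (r y ^ 2 + r z ^ 2) / 2 - dist y z ^ 2 / 4 := by
        intro s hs
        have := CAT0Space.cn s y z m hmy hmz
        have h1 : dist s y ^ 2 ≤ r y ^ 2 := by
          have := hrge y s hs; rw [dist_comm] at this
          exact pow_le_pow_left₀ dist_nonneg this 2
        have h2 : dist s z ^ 2 ≤ r z ^ 2 := by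
          have := hrge z s hs; rw [dist_comm] at this
          exact pow_le_pow_left₀ dist_nonneg this 2
        linarith
      set K : ℝ := (r y ^ 2 + r z ^ 2) / 2 - dist y z ^ 2 / 4 with hK
      have hK0 : 0 ≤ K := le_trans (sq_nonneg _) (hs s₀ hs₀)
      have hrmK : r m ≤ Real.sqrt K := by
        refine hrle m _ (fun s hsS => ?_)
        rw [dist_comm]
        have := hs s hsS
        nlinarith [Real.sq_sqrt hK0, Real.sqrt_nonneg K, dist_nonneg (x := s) (y := m)]
      calc r m ^ 2 ≤ Real.sqrt K ^ 2 := pow_le_pow_left₀ (hr0 m) hrmK 2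
        _ = K := Real.sq_sqrt hK0
    have hρm : ρ ^ 2 ≤ r m ^ 2 := pow_le_pow_left₀ hρ0 (hρle m hm) 2
    nlinarith
  -- minimizing sequence
  have hseq : ∀ n : ℕ, ∃ y ∈ C, r y ≤ ρ + 1 / (n + 1) := by
    intro n
    have hpos : (0:ℝ) < 1 / (n + 1) := by positivity
    obtain ⟨_, ⟨y, hy, rfl⟩, hlt⟩ := exists_lt_of_csInf_lt (hCne.image r) (by linarith : ρ < ρ + 1 / (n + 1))
    exact ⟨y, hy, le_of_lt hlt⟩
  choose u hu hru using hseq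
  have hdist2 : ∀ m n : ℕ, dist (u m) (u n) ^ 2 ≤
      4 * (2 * ρ * (1 / (m + 1) + 1 / (n + 1)) + (1 / (m + 1))^2 + (1 / (n + 1))^2) := by
    intro m n
    have h := key (u m) (hu m) (u n) (hu n)
    have h1 : r (u m) ^ 2 ≤ (ρ + 1 / (m + 1)) ^ 2 :=
      pow_le_pow_left₀ (hr0 _) (hru m) 2
    have h2 : r (u n) ^ 2 ≤ (ρ + 1 / (n + 1)) ^ 2 :=
      pow_le_pow_left₀ (hr0 _) (hru n) 2
    nlinarith
  have hcauchy : CauchySeq u := by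
    rw [Metric.cauchySeq_iff']
    intro ε hε
    obtain ⟨N, hN⟩ := exists_nat_gt (16 * (ρ + 1) / ε ^ 2)
    refine ⟨N, fun n hn => ?_⟩
    have hNpos : (0:ℝ) < N + 1 := by positivity
    have hδN : (1:ℝ) / (N + 1) < ε ^ 2 / (16 * (ρ + 1)) := by
      rw [div_lt_div_iff₀ hNpos (by positivity)]
      have h16 : (0:ℝ) < 16 * (ρ + 1) := by positivity
      rw [div_lt_iff₀ (by positivity)] at hN
      nlinarith
    have hδn : (1:ℝ) / (n + 1) ≤ 1 / (N + 1) := by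
      apply one_div_le_one_div_of_le hNpos
      exact_mod_cast by omega
    have hδ1 : (1:ℝ) / (N + 1) ≤ 1 := by
      rw [div_le_one hNpos]; linarith
    have h := hdist2 n N
    have hlt : dist (u n) (u N) ^ 2 < ε ^ 2 := by
      have hδpos : (0:ℝ) < 1 / (N + 1) := by positivity
      have e1 : ρ * (1 / (n + 1)) ≤ ρ * (1 / (N + 1)) := mul_le_mul_of_nonneg_left hδn hρ0
      have e2 : ((1:ℝ) / (n + 1)) ^ 2 ≤ (1 / (N + 1)) ^ 2 :=
        pow_le_pow_left₀ (by positivity) hδn 2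
      have e3 : ((1:ℝ) / (N + 1)) ^ 2 ≤ 1 / (N + 1) := by nlinarith
      have : dist (u n) (u N) ^ 2 ≤ 4 * (1 / (N + 1)) * (4 * ρ + 2) := by nlinarith
      have h2 : 4 * (1 / (N + 1)) * (4 * ρ + 2) < ε ^ 2 := by
        have := hδN
        rw [lt_div_iff₀ (by positivity : (0:ℝ) < 16 * (ρ + 1))] at this
        nlinarith
      linarith
    exact lt_of_pow_lt_pow_left₀ 2 (le_of_lt hε) hlt
  obtain ⟨c, hc⟩ := cauchySeq_tendsto_of_complete hcauchy
  have hcC : c ∈ C := hC.mem_of_tendsto hc (Filter.Eventually.of_forall hu)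
  have hrc : r c ≤ ρ := by
    refine le_of_forall_pos_le_add (fun ε hε => ?_)
    obtain ⟨N₁, hN₁⟩ := (Metric.tendsto_atTop.mp hc) (ε / 2) (by linarith)
    obtain ⟨N₂, hN₂⟩ := exists_nat_gt (2 / ε)
    set n := max N₁ N₂
    have hd := hN₁ n (le_max_left _ _)
    have h1n : (1:ℝ) / (n + 1) ≤ ε / 2 := by
      have hn2 : (N₂ : ℝ) ≤ n := by exact_mod_cast le_max_right N₁ N₂
      rw [div_le_div_iff₀ (by positivity) (by linarith : (0:ℝ) < 2)]
      have : 2 / ε < (n:ℝ) := lt_of_lt_of_le hN₂ hn2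
      rw [div_lt_iff₀ hε] at this
      nlinarith
    calc r c ≤ r (u n) + dist c (u n) := hlip c (u n)
      _ ≤ (ρ + 1 / (n + 1)) + ε / 2 := by
          have := hru n
          rw [dist_comm] at hd
          linarith [le_of_lt hd]
      _ ≤ ρ + ε := by linarith
  refine ⟨c, hcC, fun y hy => le_trans hrc (hρle y hy), fun c' hc' hmin => ?_⟩
  have hrc' : r c' ≤ ρ := le_trans (hmin c hcC) hrc
  have h := key c' hc' c hcC
  have h1 : r c' ^ 2 ≤ ρ ^ 2 := pow_le_pow_left₀ (hr0 _) hrc' 2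
  have h2 : r c ^ 2 ≤ ρ ^ 2 := pow_le_pow_left₀ (hr0 _) hrc 2
  have : dist c' c ^ 2 ≤ 0 := by nlinarith
  have := sq_nonneg (dist c' c)
  have hd0 : dist c' c = 0 := by nlinarith [dist_nonneg (x := c') (y := c)]
  exact dist_eq_zero.mp hd0

/-- If H₂ normalizes H₁ and both have nonempty fixed-point sets in a complete CAT(0)
space on which the ambient group acts by isometries, then they have a common fixed point. -/
theorem fix_inter_of_normalizes {Γ : Type*} [Group Γ]
    {X : Type*} [MetricSpace X] [CompleteSpace X] [CAT0Space X]
    [MulAction Γ X] (hiso : ∀ g : Γ, Isometry (fun x : X => g • x))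
    (H₁ H₂ : Subgroup Γ) (hnorm : H₂ ≤ Subgroup.normalizer (H₁ : Set Γ))
    (h1 : ∃ x : X, ∀ g ∈ H₁, g • x = x) (h2 : ∃ x : X, ∀ g ∈ H₂, g • x = x) :
    ∃ x : X, (∀ g ∈ H₁, g • x = x) ∧ (∀ g ∈ H₂, g • x = x) := by
  obtain ⟨x₁, hx₁⟩ := h1
  obtain ⟨x₂, hx₂⟩ := h2
  have hdist : ∀ (g : Γ) (a b : X), dist (g • a) (g • b) = dist a b := fun g a b =>
    (hiso g).dist_eq a b
  -- conjugation into H₁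
  have hconj : ∀ h ∈ H₂, ∀ g ∈ H₁, h⁻¹ * g * h ∈ H₁ := by
    intro h hh g hg
    have := (Subgroup.mem_normalizer_iff.mp (hnorm ((inv_mem hh : h⁻¹ ∈ H₂)))) g
    simpa [mul_assoc] using this.mp hg
  set C : Set X := {y | ∀ g ∈ H₁, g • y = y} with hCdef
  set S : Set X := (fun h : Γ => h • x₁) '' (H₂ : Set Γ) with hSdef
  -- C is stable under H₂
  have hCstab : ∀ h ∈ H₂, ∀ y ∈ C, h • y ∈ C := by
    intro h hh y hyC g hg
    have h₁ : (h⁻¹ * g * h) • y = y := hyC _ (hconj h hh g hg)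
    calc g • h • y = (g * h) • y := (mul_smul g h y).symm
      _ = (h * (h⁻¹ * g * h)) • y := by group
      _ = h • ((h⁻¹ * g * h) • y) := mul_smul _ _ _
      _ = h • y := by rw [h₁]
  have hx₁C : x₁ ∈ C := hx₁
  have hSC : S ⊆ C := by
    rintro _ ⟨h, hh, rfl⟩
    exact hCstab h hh x₁ hx₁C
  have hCclosed : IsClosed C := by
    have : C = ⋂ g ∈ H₁, {y : X | g • y = y} := by
      ext y; simp [hCdef, Set.mem_iInter]
    rw [this]
    exact isClosed_biInter fun g _ => isClosed_eq (hiso g).continuous continuous_id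
  have hmid : ∀ y ∈ C, ∀ z ∈ C, ∃ m ∈ C, dist y m = dist y z / 2 ∧ dist z m = dist y z / 2 := by
    intro y hy z hz
    obtain ⟨γ, hγ0, hγ1, hγd⟩ := CAT0Space.geodesic y z
    refine ⟨γ (1/2), ?_, ?_, ?_⟩
    · -- midpoint uniqueness via CN
      intro g hg
      have hmy : dist y (γ (1/2)) = dist y z / 2 := by
        have := hγd 0 (by norm_num) (1/2) (by norm_num)
        rw [hγ0, show |0 - (1:ℝ)/2| = 1/2 by norm_num] at this
        rw [this]; ring
      have hmz : dist z (γ (1/2)) = dist y z / 2 := by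
        have := hγd 1 (by norm_num) (1/2) (by norm_num)
        rw [hγ1, show |1 - (1:ℝ)/2| = 1/2 by norm_num] at this
        rw [this]; ring
      have hmy' : dist y (g • γ (1/2)) = dist y z / 2 := by
        calc dist y (g • γ (1/2)) = dist (g • y) (g • γ (1/2)) := by rw [hy g hg]
          _ = dist y (γ (1/2)) := hdist g _ _
          _ = dist y z / 2 := hmy
      have hmz' : dist z (g • γ (1/2)) = dist y z / 2 := by
        calc dist z (g • γ (1/2)) = dist (g • z) (g • γ (1/2)) := by rw [hz g hg]
          _ = dist z (γ (1/2)) := hdist g _ _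
          _ = dist y z / 2 := hmz
      have hcn := CAT0Space.cn (γ (1/2)) y z (g • γ (1/2)) hmy' hmz'
      have h0 : dist (γ (1/2)) (g • γ (1/2)) ^ 2 ≤ 0 := by
        rw [dist_comm (γ (1/2)) y, hmy, dist_comm (γ (1/2)) z, hmz] at hcn; nlinarith
      have := sq_nonneg (dist (γ (1/2)) (g • γ (1/2)))
      have hd0 : dist (γ (1/2)) (g • γ (1/2)) = 0 := by
        nlinarith [dist_nonneg (x := γ (1/2)) (y := g • γ (1/2))]
      exact (dist_eq_zero.mp hd0).symm
    · have := hγd 0 (by norm_num) (1/2) (by norm_num)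
      rw [hγ0, show |0 - (1:ℝ)/2| = 1/2 by norm_num] at this
      rw [this]; ring
    · have := hγd 1 (by norm_num) (1/2) (by norm_num)
      rw [hγ1, show |1 - (1:ℝ)/2| = 1/2 by norm_num] at this
      rw [this]; ring
  have hbd : ∃ x₀ R, ∀ s ∈ S, dist s x₀ ≤ R := by
    refine ⟨x₂, dist x₁ x₂, ?_⟩
    rintro _ ⟨h, hh, rfl⟩
    calc dist (h • x₁) x₂ = dist (h • x₁) (h • x₂) := by rw [hx₂ h hh]
      _ = dist x₁ x₂ := hdist h _ _
      _ ≤ dist x₁ x₂ := le_rfl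
  obtain ⟨c, hcC, hcmin, hcuniq⟩ := exists_unique_circumcenter C S hCclosed ⟨x₁, hx₁C⟩
    ⟨x₁, ⟨1, H₂.one_mem, one_smul Γ x₁⟩⟩ hbd hmid
  refine ⟨c, hcC, fun h hh => ?_⟩
  -- h • c is also a circumcenter
  have himg : ∀ h ∈ H₂, (dist (h • c)) '' S = (dist c) '' S := by
    intro h hh
    ext d
    constructor
    · rintro ⟨_, ⟨h', hh', rfl⟩, rfl⟩
      refine ⟨(h⁻¹ * h') • x₁, ⟨h⁻¹ * h', mul_mem (inv_mem hh) hh', rfl⟩, ?_⟩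
      calc dist c ((h⁻¹ * h') • x₁) = dist (h • c) (h • (h⁻¹ * h') • x₁) := (hdist h _ _).symm
        _ = dist (h • c) (h' • x₁) := by rw [← mul_smul, ← mul_assoc, mul_inv_cancel, one_mul]
    · rintro ⟨_, ⟨h', hh', rfl⟩, rfl⟩
      refine ⟨(h * h') • x₁, ⟨h * h', mul_mem hh hh', rfl⟩, ?_⟩
      calc dist (h • c) ((h * h') • x₁) = dist (h • c) (h • h' • x₁) := by rw [mul_smul]
        _ = dist c (h' • x₁) := hdist h _ _
  have hhcC : h • c ∈ C := hCstab h hh c hcC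
  have : h • c = c := by
    refine hcuniq (h • c) hhcC (fun y hy => ?_)
    rw [himg h hh]
    exact hcmin y hy
  exact this
end

section
/- Let X be a complete CAT(0) space and let H₁, …, H_ℓ be pairwise commuting subgroups of Isom(X) (i.e., every element of H_i commutes with every element of H_j for i ≠ j). If Fix(H_i) is non-empty for each i, then the intersection of all the Fix(H_i) is non-empty. -/
section Aux

variable {X : Type*} [MetricSpace X] [CAT0Space X]

/-- Midpoints exist in a CAT(0) space. -/
lemma CAT0.exists_midpoint (y z : X) :
    ∃ m : X, dist y m = dist y z / 2 ∧ dist z m = dist y z / 2 := by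
  obtain ⟨γ, h0, h1, hγ⟩ := CAT0Space.geodesic y z
  refine ⟨γ (1/2), ?_, ?_⟩
  · have := hγ 0 (by norm_num) (1/2) (by norm_num)
    rw [h0] at this
    rw [this, show |(0:ℝ) - 1/2| = 1/2 by norm_num]; ring
  · have := hγ 1 (by norm_num) (1/2) (by norm_num)
    rw [h1] at this
    rw [this, show |(1:ℝ) - 1/2| = 1/2 by norm_num]; ring

/-- Midpoints are unique in a CAT(0) space. -/
lemma CAT0.midpoint_unique {y z m m' : X}
    (h1 : dist y m = dist y z / 2) (h2 : dist z m = dist y z / 2)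
    (h1' : dist y m' = dist y z / 2) (h2' : dist z m' = dist y z / 2) :
    m = m' := by
  have := CAT0Space.cn m' y z m h1 h2
  rw [dist_comm m' y, dist_comm m' z] at this
  rw [h1', h2'] at this
  have hd : dist m' m = 0 := by nlinarith [dist_nonneg (x := m') (y := m)]
  rw [dist_comm] at hd
  exact dist_eq_zero.mp hd

variable [CompleteSpace X]

/-- Existence and uniqueness of the nearest point on a nonempty, closed,
midpoint-closed subset of a complete CAT(0) space. -/
lemma CAT0.exists_unique_nearest (A : Set X) (hne : A.Nonempty) (hclosed : IsClosed A)
    (hmid : ∀ y ∈ A, ∀ z ∈ A, ∃ m ∈ A, dist y m = dist y z / 2 ∧ dist z m = dist y z / 2)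
    (x₀ : X) :
    ∃ p ∈ A, dist x₀ p = Metric.infDist x₀ A ∧
      ∀ q ∈ A, dist x₀ q = Metric.infDist x₀ A → q = p := by
  set d := Metric.infDist x₀ A with hd
  have hd0 : 0 ≤ d := Metric.infDist_nonneg
  have hdle : ∀ a ∈ A, d ≤ dist x₀ a := fun a ha => Metric.infDist_le_dist_of_mem ha
  -- choose a minimizing sequence
  have hsel : ∀ n : ℕ, ∃ a ∈ A, dist x₀ a < d + ((n : ℝ) + 1)⁻¹ := by
    intro n
    have : d < d + ((n : ℝ) + 1)⁻¹ := by
      have : (0:ℝ) < ((n : ℝ) + 1)⁻¹ := by positivity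
      linarith
    exact (Metric.infDist_lt_iff hne).mp this
  choose u hu hud using hsel
  -- key CN estimate for two points of A
  have hkey : ∀ a ∈ A, ∀ b ∈ A,
      dist a b ^ 2 ≤ 2 * (dist x₀ a ^ 2 + dist x₀ b ^ 2) - 4 * d ^ 2 := by
    intro a ha b hb
    obtain ⟨m, hm, hma, hmb⟩ := hmid a ha b hb
    have hcn := CAT0Space.cn x₀ a b m hma hmb
    have := hdle m hm
    nlinarith
  -- Cauchy
  set δ : ℕ → ℝ := fun n => ((n : ℝ) + 1)⁻¹ with hδ
  have hδ0 : ∀ n, 0 < δ n := fun n => by positivity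
  have hδanti : ∀ {m n : ℕ}, m ≤ n → δ n ≤ δ m := by
    intro m n h
    apply inv_anti₀ (by positivity)
    have : (m : ℝ) ≤ n := Nat.cast_le.mpr h
    linarith
  set b : ℕ → ℝ := fun N => Real.sqrt (8 * d * δ N + 4 * δ N ^ 2) with hb
  have hcauchy : CauchySeq u := by
    apply cauchySeq_of_le_tendsto_0 b
    · intro n m N hn hm
      apply Real.le_sqrt_of_sq_le
      have h1 : dist x₀ (u n) < d + δ N := lt_of_lt_of_le (hud n) (by
        have := hδanti hn; linarith)
      have h2 : dist x₀ (u m) < d + δ N := lt_of_lt_of_le (hud m) (by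
        have := hδanti hm; linarith)
      have h3 := hkey (u n) (hu n) (u m) (hu m)
      have h4 := hdle (u n) (hu n)
      have h5 := hdle (u m) (hu m)
      nlinarith [hδ0 N]
    · have hδlim : Filter.Tendsto δ Filter.atTop (nhds 0) := by
        simpa [hδ, one_div] using (tendsto_one_div_add_atTop_nhds_zero_nat : Filter.Tendsto (fun n : ℕ => 1 / ((n : ℝ) + 1)) Filter.atTop (nhds 0))
      have : Filter.Tendsto (fun N => 8 * d * δ N + 4 * δ N ^ 2) Filter.atTop (nhds 0) := by
        have h1 : Filter.Tendsto (fun N => 8 * d * δ N) Filter.atTop (nhds 0) := by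
          simpa using hδlim.const_mul (8 * d)
        have h2 : Filter.Tendsto (fun N => 4 * δ N ^ 2) Filter.atTop (nhds 0) := by
          have := (hδlim.mul hδlim).const_mul (4 : ℝ)
          simpa [pow_two, mul_assoc] using this
        simpa using h1.add h2
      have := (Real.continuous_sqrt.tendsto 0).comp this
      simpa [hb, Real.sqrt_zero, Function.comp_def] using this
  obtain ⟨p, hp⟩ := cauchySeq_tendsto_of_complete hcauchy
  have hpA : p ∈ A := hclosed.mem_of_tendsto hp (Filter.Eventually.of_forall hu)
  have hdist : dist x₀ p = d := by
    have hlim : Filter.Tendsto (fun n => dist x₀ (u n)) Filter.atTop (nhds (dist x₀ p)) :=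
      (Continuous.tendsto (continuous_const.dist continuous_id) p).comp hp
    have hδlim : Filter.Tendsto (fun n => d + δ n) Filter.atTop (nhds d) := by
      have : Filter.Tendsto δ Filter.atTop (nhds 0) := by
        simpa [hδ, one_div] using (tendsto_one_div_add_atTop_nhds_zero_nat : Filter.Tendsto (fun n : ℕ => 1 / ((n : ℝ) + 1)) Filter.atTop (nhds 0))
      simpa using (tendsto_const_nhds (x := d)).add this
    have hge : d ≤ dist x₀ p :=
      le_of_tendsto_of_tendsto tendsto_const_nhds hlim
        (Filter.Eventually.of_forall fun n => hdle (u n) (hu n))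
    have hle : dist x₀ p ≤ d :=
      le_of_tendsto_of_tendsto hlim hδlim
        (Filter.Eventually.of_forall fun n => le_of_lt (hud n))
    linarith
  refine ⟨p, hpA, hdist, ?_⟩
  intro q hq hqd
  have h3 := hkey q hq p hpA
  rw [hqd, hdist] at h3
  have : dist q p = 0 := by nlinarith [dist_nonneg (x := q) (y := p)]
  exact dist_eq_zero.mp this

/-- If a set is nonempty, closed, midpoint-closed and invariant under a subgroup `K`
of isometries having a fixed point, then `K` has a fixed point in the set. -/
lemma CAT0.key (A : Set X) (hne : A.Nonempty) (hclosed : IsClosed A)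
    (hmid : ∀ y ∈ A, ∀ z ∈ A, ∃ m ∈ A, dist y m = dist y z / 2 ∧ dist z m = dist y z / 2)
    (K : Subgroup (X ≃ᵢ X)) (hinv : ∀ h ∈ K, ∀ a ∈ A, h a ∈ A)
    (hKfix : ∃ x : X, ∀ h ∈ K, h x = x) :
    ∃ p ∈ A, ∀ h ∈ K, h p = p := by
  obtain ⟨x₀, hx₀⟩ := hKfix
  obtain ⟨p, hpA, hpd, hpuniq⟩ := CAT0.exists_unique_nearest A hne hclosed hmid x₀
  refine ⟨p, hpA, fun h hh => ?_⟩
  apply hpuniq (h p) (hinv h hh p hpA)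
  calc dist x₀ (h p) = dist (h x₀) (h p) := by rw [hx₀ h hh]
    _ = dist x₀ p := h.dist_eq x₀ p
    _ = Metric.infDist x₀ A := hpd

end Aux

/-- Pairwise commuting subgroups of the isometry group of a complete CAT(0) space, each with
a nonempty fixed-point set, have a common fixed point. -/
theorem fix_inter_of_pairwise_commuting {X : Type*} [MetricSpace X] [CompleteSpace X]
    [CAT0Space X] {ℓ : ℕ} (hl : 0 < ℓ) (H : Fin ℓ → Subgroup (X ≃ᵢ X))
    (hcomm : ∀ i j, i ≠ j → ∀ a ∈ H i, ∀ b ∈ H j, Commute a b)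
    (hfix : ∀ i, ∃ x : X, ∀ h ∈ H i, h x = x) :
    ∃ x : X, ∀ i, ∀ h ∈ H i, h x = x := by
  -- prove by induction on k: there is a point fixed by all `H i` with `i < k`
  have main : ∀ k : ℕ, k ≤ ℓ → ∃ x : X, ∀ i : Fin ℓ, (i : ℕ) < k → ∀ h ∈ H i, h x = x := by
    intro k
    induction k with
    | zero =>
      intro _
      obtain ⟨x, -⟩ := hfix ⟨0, hl⟩
      exact ⟨x, fun i hi => absurd hi (Nat.not_lt_zero _)⟩
    | succ k ih =>
      intro hk
      have hkl : k < ℓ := hk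
      obtain ⟨x, hx⟩ := ih (le_of_lt hkl)
      set A : Set X := {y : X | ∀ i : Fin ℓ, (i : ℕ) < k → ∀ h ∈ H i, h y = y} with hA
      have hne : A.Nonempty := ⟨x, hx⟩
      have hclosed : IsClosed A := by
        have : A = ⋂ (i : Fin ℓ), ⋂ (_ : (i : ℕ) < k), ⋂ (h : X ≃ᵢ X), ⋂ (_ : h ∈ H i),
            {y : X | h y = y} := by
          ext y
          simp [hA, Set.mem_iInter]
        rw [this]
        refine isClosed_iInter fun i => isClosed_iInter fun _ =>
          isClosed_iInter fun h => isClosed_iInter fun _ => ?_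
        exact isClosed_eq h.continuous continuous_id
      have hmid : ∀ y ∈ A, ∀ z ∈ A,
          ∃ m ∈ A, dist y m = dist y z / 2 ∧ dist z m = dist y z / 2 := by
        intro y hy z hz
        obtain ⟨m, hm1, hm2⟩ := CAT0.exists_midpoint y z
        refine ⟨m, ?_, hm1, hm2⟩
        intro i hi h hh
        have hy' : h y = y := hy i hi h hh
        have hz' : h z = z := hz i hi h hh
        have h1 : dist y (h m) = dist y z / 2 := by
          calc dist y (h m) = dist (h y) (h m) := by rw [hy']
            _ = dist y m := h.dist_eq y m
            _ = dist y z / 2 := hm1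
        have h2 : dist z (h m) = dist y z / 2 := by
          calc dist z (h m) = dist (h z) (h m) := by rw [hz']
            _ = dist z m := h.dist_eq z m
            _ = dist y z / 2 := hm2
        exact (CAT0.midpoint_unique hm1 hm2 h1 h2).symm
      have hinv : ∀ h ∈ H ⟨k, hkl⟩, ∀ a ∈ A, h a ∈ A := by
        intro h hh a ha i hi g hg
        have hne' : i ≠ ⟨k, hkl⟩ := by
          intro heq
          rw [heq] at hi
          exact lt_irrefl k hi
        have hc : Commute g h := hcomm i ⟨k, hkl⟩ hne' g hg h hh
        have : g (h a) = h (g a) := by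
          have := congrArg (fun e : X ≃ᵢ X => e a) hc.eq
          simpa [IsometryEquiv.mul_apply] using this
        rw [this, ha i hi g hg]
      obtain ⟨p, hpA, hp⟩ := CAT0.key A hne hclosed hmid (H ⟨k, hkl⟩) hinv (hfix ⟨k, hkl⟩)
      refine ⟨p, fun i hi h hh => ?_⟩
      rcases Nat.lt_or_ge (i : ℕ) k with h' | h'
      · exact hpA i h' h hh
      · have : (i : ℕ) = k := Nat.le_antisymm (Nat.lt_succ_iff.mp hi) h'
        have : i = ⟨k, hkl⟩ := Fin.ext this
        rw [this] at hh
        exact hp h hh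
  obtain ⟨x, hx⟩ := main ℓ le_rfl
  exact ⟨x, fun i => hx i i.isLt⟩
end

section
/- For positive integers n and k, define g_n(k) = (k−1)·⌊n/(k+1)⌋. Then for 3 ≤ k ≤ n−1 one has g_n(3) ≤ g_n(k) + 1, with equality if and only if k is even and n ∈ {2k, 2k+1}. -/
/-- The function g_n(k) = (k − 1)⌊n/(k + 1)⌋ (natural-number division is the floor). -/
def gfun (n k : ℕ) : ℕ := (k - 1) * (n / (k + 1))

/-- For 3 ≤ k ≤ n − 1, g_n(3) ≤ g_n(k) + 1, with equality iff k is even and n ∈ {2k, 2k+1}. -/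
theorem gfun_three_le (n k : ℕ) (hn : 0 < n) (hk3 : 3 ≤ k) (hkn : k ≤ n - 1) :
    gfun n 3 ≤ gfun n k + 1 ∧
      (gfun n 3 = gfun n k + 1 ↔ Even k ∧ (n = 2 * k ∨ n = 2 * k + 1)) := by
  have hn1 : k + 1 ≤ n := by omega
  simp only [gfun]
  rw [Nat.even_iff]
  have hp := Nat.div_add_mod n 4
  have hps : n % 4 < 4 := Nat.mod_lt _ (by norm_num)
  have hq := Nat.div_add_mod n (k + 1)
  have hqr : n % (k + 1) < k + 1 := Nat.mod_lt _ (by omega)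
  have hq1 : 1 ≤ n / (k + 1) := (Nat.one_le_div_iff (by omega)).2 hn1
  set p := n / 4 with hpdef
  set q := n / (k + 1) with hqdef
  set r := n % (k + 1) with hrdef
  set s := n % 4 with hsdef
  rcases eq_or_lt_of_le hq1 with h1 | h2
  · rw [← h1] at hq ⊢
    omega
  · have hge : (k + 1) * 2 ≤ (k + 1) * q := Nat.mul_le_mul_left _ h2
    have hmain : 2 * p ≤ (k - 1) * q := by
      rcases Nat.lt_or_ge k 5 with hk5 | hk5
      · rcases eq_or_lt_of_le (show 2 ≤ q from h2) with hq2 | hq3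
        · rw [← hq2] at hq ⊢
          omega
        · interval_cases k <;> omega
      · obtain ⟨a, rfl⟩ : ∃ a, k = a + 5 := ⟨k - 5, by omega⟩
        obtain ⟨b, hb⟩ : ∃ b, q = b + 2 := ⟨q - 2, by omega⟩
        rw [hb] at hq ⊢
        rw [show a + 5 - 1 = a + 4 from by omega]
        have e1 : (a + 5 + 1) * (b + 2) = a * b + 2 * a + 6 * b + 12 := by ring
        have e2 : (a + 4) * (b + 2) = a * b + 2 * a + 4 * b + 8 := by ring
        rw [e1] at hq
        rw [e2]
        generalize a * b = m at hq ⊢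
        omega
    set A := (k - 1) * q with hA
    set B := (k + 1) * q with hB
    omega
end

section
/- In the braid group B_m with standard generators σ₁, …, σ_{m−1} and σ_m := σ₁⋯σ_{m−2}σ_{m−1}σ_{m−2}^{−1}⋯σ₁^{−1}, the relation [σ_i, σ_j] = 1 holds whenever |i − j| ≢ ±1 (mod m). -/
/-- The defining relators of the braid group B_m on the standard generators σ₁, …, σ_{m−1}
(here indexed zero-based by Fin (m − 1)): the braid relations for adjacent generators and
commutation of distant generators. -/
def braidRels (m : ℕ) : Set (FreeGroup (Fin (m - 1))) :=
  {r | (∃ i j : Fin (m - 1), (i : ℕ) + 1 = (j : ℕ) ∧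
          r = FreeGroup.of i * FreeGroup.of j * FreeGroup.of i *
            (FreeGroup.of j * FreeGroup.of i * FreeGroup.of j)⁻¹) ∨
       (∃ i j : Fin (m - 1), (i : ℕ) + 2 ≤ (j : ℕ) ∧
          r = FreeGroup.of i * FreeGroup.of j * (FreeGroup.of j * FreeGroup.of i)⁻¹)}

/-- The braid group B_m, presented by the standard generators and relations. -/
def BraidGroup (m : ℕ) : Type := PresentedGroup (braidRels m)

instance (m : ℕ) : Group (BraidGroup m) := inferInstanceAs (Group (PresentedGroup _))

/-- The elements σ₁, …, σ_m of B_m (one-based indexing): for 1 ≤ i ≤ m − 1 the standard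
generator, and σ_m := σ₁⋯σ_{m−2} σ_{m−1} σ_{m−2}⁻¹⋯σ₁⁻¹ (the value is 1 for indices out of
range). -/
noncomputable def sigmaB (m : ℕ) (i : ℕ) : BraidGroup m :=
  if h : 1 ≤ i ∧ i ≤ m - 1 then
    PresentedGroup.of (⟨i - 1, by omega⟩ : Fin (m - 1))
  else if h2 : i = m ∧ 2 ≤ m then
    (List.ofFn fun t : Fin (m - 2) =>
        PresentedGroup.of (Fin.castLE (by omega) t : Fin (m - 1))).prod *
      PresentedGroup.of (⟨m - 2, by omega⟩ : Fin (m - 1)) *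
      ((List.ofFn fun t : Fin (m - 2) =>
        PresentedGroup.of (Fin.castLE (by omega) t : Fin (m - 1))).prod)⁻¹
  else 1

namespace BraidAux

lemma rel_one {m : ℕ} {r : FreeGroup (Fin (m-1))} (hr : r ∈ braidRels m) :
    (PresentedGroup.mk (braidRels m) r : BraidGroup m) = 1 := by
  exact (QuotientGroup.eq_one_iff _).mpr (Subgroup.subset_normalClosure hr)

noncomputable def gen (m k : ℕ) : BraidGroup m :=
  if h : k < m - 1 then PresentedGroup.of (⟨k, h⟩ : Fin (m-1)) else 1

lemma gen_braid {m k : ℕ} (h : k + 1 < m - 1) :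
    gen m k * gen m (k+1) * gen m k = gen m (k+1) * gen m k * gen m (k+1) := by
  have h1 := rel_one (m := m) (r := FreeGroup.of (⟨k, by omega⟩ : Fin (m-1)) *
      FreeGroup.of (⟨k+1, h⟩ : Fin (m-1)) * FreeGroup.of (⟨k, by omega⟩ : Fin (m-1)) *
      (FreeGroup.of (⟨k+1, h⟩ : Fin (m-1)) * FreeGroup.of (⟨k, by omega⟩ : Fin (m-1)) *
        FreeGroup.of (⟨k+1, h⟩ : Fin (m-1)))⁻¹)
      (Or.inl ⟨⟨k, by omega⟩, ⟨k+1, h⟩, rfl, rfl⟩)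
  simp only [map_mul, map_inv, mul_inv_eq_one] at h1
  simp [gen, dif_pos, h, Nat.lt_of_succ_lt h, PresentedGroup.of]
  exact h1

lemma gen_comm {m k l : ℕ} (h : k + 2 ≤ l) : Commute (gen m k) (gen m l) := by
  by_cases hl : l < m - 1
  · have h1 := rel_one (m := m) (r := FreeGroup.of (⟨k, by omega⟩ : Fin (m-1)) *
        FreeGroup.of (⟨l, hl⟩ : Fin (m-1)) *
        (FreeGroup.of (⟨l, hl⟩ : Fin (m-1)) * FreeGroup.of (⟨k, by omega⟩ : Fin (m-1)))⁻¹)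
        (Or.inr ⟨⟨k, by omega⟩, ⟨l, hl⟩, h, rfl⟩)
    simp only [map_mul, map_inv, mul_inv_eq_one] at h1
    have hk : k < m - 1 := by omega
    unfold Commute SemiconjBy
    simp [gen, dif_pos, hl, hk, PresentedGroup.of]
    exact h1
  · simp [gen, dif_neg, hl, Commute.one_right]

end BraidAux

namespace BraidAux

noncomputable def del (m : ℕ) : ℕ → BraidGroup m
  | 0 => 1
  | t+1 => del m t * gen m t

lemma gen_comm_del {m t j : ℕ} (h : t + 1 ≤ j) : Commute (del m t) (gen m j) := by
  induction t with
  | zero => exact Commute.one_left _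
  | succ t ih =>
    exact Commute.mul_left (ih (by omega)) (gen_comm (by omega))

lemma del_conj {m t k : ℕ} (hk : k + 2 ≤ t) (ht : t ≤ m - 1) :
    del m t * gen m k * (del m t)⁻¹ = gen m (k+1) := by
  induction t with
  | zero => omega
  | succ t ih =>
    by_cases hkt : k + 2 ≤ t
    · have hc : Commute (gen m t) (gen m k) := (gen_comm (by omega)).symm
      have : del m (t+1) * gen m k * (del m (t+1))⁻¹
          = del m t * gen m k * (del m t)⁻¹ := by
        simp only [del, mul_inv_rev]
        rw [mul_assoc (del m t), hc.eq]
        group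
      rw [this]; exact ih hkt (by omega)
    · obtain ⟨s, rfl⟩ : ∃ s, t = s + 1 := ⟨t - 1, by omega⟩
      have hk2 : k = s := by omega
      subst hk2
      have hbr : gen m k * gen m (k+1) * gen m k
          = gen m (k+1) * gen m k * gen m (k+1) := gen_braid (by omega)
      have hcomm : Commute (del m k) (gen m (k+1)) := gen_comm_del (by omega)
      have key : gen m k * gen m (k+1) * gen m k * (gen m (k+1))⁻¹ * (gen m k)⁻¹
          = gen m (k+1) := by
        rw [hbr]; group
      show del m k * gen m k * gen m (k+1) * gen m k *
            (del m k * gen m k * gen m (k+1))⁻¹ = gen m (k+1)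
      calc del m k * gen m k * gen m (k+1) * gen m k *
            (del m k * gen m k * gen m (k+1))⁻¹
          = del m k * (gen m k * gen m (k+1) * gen m k * (gen m (k+1))⁻¹ *
              (gen m k)⁻¹) * (del m k)⁻¹ := by group
        _ = del m k * gen m (k+1) * (del m k)⁻¹ := by rw [key]
        _ = gen m (k+1) := by rw [hcomm.eq]; group

end BraidAux

namespace BraidAux

lemma ofFn_gen (m n : ℕ) : (List.ofFn fun t : Fin n => gen m (t : ℕ)).prod = del m n := by
  induction n with
  | zero => simp [del]
  | succ n ih =>
    rw [List.ofFn_succ']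
    simp only [List.concat_eq_append, List.prod_append, List.prod_cons, List.prod_nil,
      Fin.coe_castSucc, Fin.val_last, ih, mul_one, del]

lemma gen_of {m k : ℕ} (h : k < m - 1) :
    gen m k = (PresentedGroup.of (⟨k, h⟩ : Fin (m-1)) : BraidGroup m) := dif_pos h

lemma sigmaB_lt {m i : ℕ} (h1 : 1 ≤ i) (h2 : i ≤ m - 1) : sigmaB m i = gen m (i - 1) := by
  rw [sigmaB, gen_of (show i - 1 < m - 1 by omega)]
  exact dif_pos ⟨h1, h2⟩

lemma sigmaB_m {m : ℕ} (hm : 3 ≤ m) :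
    sigmaB m m = del m (m-2) * gen m (m-2) * (del m (m-2))⁻¹ := by
  rw [sigmaB]
  refine (dif_neg (show ¬ (1 ≤ m ∧ m ≤ m - 1) by omega)).trans
    ((dif_pos (show m = m ∧ 2 ≤ m from ⟨rfl, by omega⟩)).trans ?_)
  have hfun : (fun t : Fin (m-2) =>
      (PresentedGroup.of (Fin.castLE (by omega) t : Fin (m - 1)) : BraidGroup m))
      = fun t : Fin (m-2) => gen m (t : ℕ) := by
    funext t
    rw [gen_of (show (t : ℕ) < m - 1 by omega)]
    rfl
  rw [hfun]
  change (List.ofFn fun t : Fin (m-2) => gen m (t : ℕ)).prod *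
    (show BraidGroup m from PresentedGroup.of (⟨m - 2, by omega⟩ : Fin (m-1))) *
    ((List.ofFn fun t : Fin (m-2) => gen m (t : ℕ)).prod)⁻¹ = _
  rw [← gen_of (show m - 2 < m - 1 by omega), ofFn_gen]

end BraidAux

open BraidAux

/-- In B_m, σ_i and σ_j commute whenever i − j ≢ ±1 (mod m). -/
theorem braid_commute (m : ℕ) (hm : 3 ≤ m) (i j : ℕ) (hi : 1 ≤ i) (hi' : i ≤ m)
    (hj : 1 ≤ j) (hj' : j ≤ m)
    (h1 : ¬((i : ℤ) ≡ (j : ℤ) + 1 [ZMOD (m : ℤ)]))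
    (h2 : ¬((j : ℤ) ≡ (i : ℤ) + 1 [ZMOD (m : ℤ)])) :
    Commute (sigmaB m i) (sigmaB m j) := by
  -- basic exclusions
  have e1 : i ≠ j + 1 := by
    rintro rfl; exact h1 (by push_cast; rfl)
  have e2 : j ≠ i + 1 := by
    rintro rfl; exact h2 (by push_cast; rfl)
  -- key lemma: σ_m commutes with σ_j for 2 ≤ j ≤ m-2
  have key : ∀ k : ℕ, 2 ≤ k → k ≤ m - 2 → Commute (sigmaB m m) (sigmaB m k) := by
    intro k hk2 hkm
    rw [sigmaB_m hm, sigmaB_lt (by omega) (by omega)]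
    have hconj : del m (m-2) * gen m (k-2) * (del m (m-2))⁻¹ = gen m (k-1) := by
      have := del_conj (m := m) (t := m-2) (k := k-2) (by omega) (by omega)
      rwa [show k - 2 + 1 = k - 1 by omega] at this
    have hc : Commute (gen m (m-2)) (gen m (k-2)) := (gen_comm (by omega)).symm
    unfold Commute SemiconjBy
    calc del m (m-2) * gen m (m-2) * (del m (m-2))⁻¹ * gen m (k-1)
        = del m (m-2) * gen m (m-2) * (del m (m-2))⁻¹ *
            (del m (m-2) * gen m (k-2) * (del m (m-2))⁻¹) := by rw [hconj]
      _ = del m (m-2) * (gen m (m-2) * gen m (k-2)) * (del m (m-2))⁻¹ := by group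
      _ = del m (m-2) * (gen m (k-2) * gen m (m-2)) * (del m (m-2))⁻¹ := by rw [hc.eq]
      _ = (del m (m-2) * gen m (k-2) * (del m (m-2))⁻¹) *
            (del m (m-2) * gen m (m-2) * (del m (m-2))⁻¹) := by group
      _ = gen m (k-1) * (del m (m-2) * gen m (m-2) * (del m (m-2))⁻¹) := by rw [hconj]
  rcases eq_or_ne i j with rfl | hij
  · exact Commute.refl _
  by_cases hi2 : i ≤ m - 1 <;> by_cases hj2 : j ≤ m - 1
  · -- both standard generators
    rw [sigmaB_lt hi hi2, sigmaB_lt hj hj2]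
    rcases lt_or_gt_of_ne hij with h | h
    · exact gen_comm (by omega)
    · exact (gen_comm (by omega)).symm
  · -- j = m
    have hjm : j = m := by omega
    have ei1 : i ≠ 1 := by
      intro h
      apply h1
      have hci : (i : ℤ) = 1 := by rw [h]; norm_num
      rw [hci, hjm]
      exact (Int.modEq_iff_dvd).mpr ⟨1, by ring⟩
    have eim : i ≠ m - 1 := by
      intro h
      apply h2
      have hci : (i : ℤ) + 1 = (m : ℤ) := by
        exact_mod_cast congrArg (Nat.cast (R := ℤ)) (show i + 1 = m by omega)
      rw [hci, hjm]
    rw [hjm]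
    exact (key i (by omega) (by omega)).symm
  · -- i = m
    have him : i = m := by omega
    have ej1 : j ≠ 1 := by
      intro h
      apply h2
      have hcj : (j : ℤ) = 1 := by rw [h]; norm_num
      rw [hcj, him]
      exact (Int.modEq_iff_dvd).mpr ⟨1, by ring⟩
    have ejm : j ≠ m - 1 := by
      intro h
      apply h1
      have hcj : (j : ℤ) + 1 = (m : ℤ) := by
        exact_mod_cast congrArg (Nat.cast (R := ℤ)) (show j + 1 = m by omega)
      rw [hcj, him]
    rw [him]
    exact key j (by omega) (by omega)
  · omega
end
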